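/- Under the cutoff stopping rule with cutoff f ∈ {1,…,L}, the probability that the stopped value X_s is the maximum of X_1,…,X_L equals 1/L if f = 1, and equals ((f−1)/L)·∑_{l=f}^{L} 1/(l−1) if 1 < f ≤ L. -/

import Mathlib

/-!
STATEMENT 12 (secretary problem / cutoff stopping rule): `L` pairwise distinct
values `x 0, …, x (L-1)` are observed in the order given by a uniformly random
permutation `σ`; with cutoff `f`, the first `f - 1` observations are skipped,
and thereafter one stops at the first position whose value exceeds all earlier
ones (stopping at the last position if no such position exists).  The success
probability (the stopped value is the overall maximum) equals `1/L` if `f = 1`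
and `((f-1)/L) · ∑_{l=f}^{L} 1/(l-1)` if `1 < f ≤ L`.
Positions are 1-based: index `k : Fin L` is observation number `k + 1`.
-/

noncomputable section

/-- The index (0-based) at which the cutoff rule with cutoff `f` stops, given the
observed sequence `y`: the least index `k` with 1-based position `k + 1 ≥ f` whose
value strictly exceeds all earlier values; if there is none, the last index. -/
def stopIdx (L f : ℕ) (hL : 0 < L) (y : Fin L → ℝ) : Fin L :=
  letI : DecidablePred fun k : Fin L =>
      f ≤ (k : ℕ) + 1 ∧ ∀ j : Fin L, j < k → y j < y k := Classical.decPred _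
  let S : Finset (Fin L) :=
    Finset.univ.filter fun k => f ≤ (k : ℕ) + 1 ∧ ∀ j : Fin L, j < k → y j < y k
  if hS : S.Nonempty then S.min' hS else ⟨L - 1, Nat.sub_lt hL Nat.one_pos⟩

end

noncomputable section SecretaryAux

/-- The record set of the cutoff rule. -/
def Srec (L f : ℕ) (y : Fin L → ℝ) : Finset (Fin L) :=
  letI : DecidablePred fun k : Fin L =>
      f ≤ (k : ℕ) + 1 ∧ ∀ j : Fin L, j < k → y j < y k := Classical.decPred _
  Finset.univ.filter fun k => f ≤ (k : ℕ) + 1 ∧ ∀ j : Fin L, j < k → y j < y k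

lemma stopIdx_eq (L f : ℕ) (hL : 0 < L) (y : Fin L → ℝ) :
    stopIdx L f hL y =
      if hS : (Srec L f y).Nonempty then (Srec L f y).min' hS
      else ⟨L - 1, Nat.sub_lt hL Nat.one_pos⟩ := rfl

lemma mem_Srec {L f : ℕ} {y : Fin L → ℝ} {k : Fin L} :
    k ∈ Srec L f y ↔ f ≤ (k : ℕ) + 1 ∧ ∀ j : Fin L, j < k → y j < y k := by
  classical
  simp [Srec]

lemma success_iff {L : ℕ} (y : Fin L → ℝ) (s p : Fin L)
    (hp : ∀ j, j ≠ p → y j < y p) :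
    (∀ j, y j ≤ y s) ↔ s = p := by
  constructor
  · intro h
    by_contra hs
    exact absurd (h p) (not_le.2 (hp s hs))
  · rintro rfl
    intro j
    by_cases hj : j = s
    · exact le_of_eq (congrArg y hj)
    · exact le_of_lt (hp j hj)

lemma stopIdx_eq_zero {L : ℕ} (hL : 0 < L) (y : Fin L → ℝ) :
    stopIdx L 1 hL y = ⟨0, hL⟩ := by
  have h0 : (⟨0, hL⟩ : Fin L) ∈ Srec L 1 y :=
    mem_Srec.2 ⟨le_refl 1, fun j hj => absurd hj (by simp [Fin.lt_def])⟩
  rw [stopIdx_eq, dif_pos ⟨_, h0⟩]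
  exact le_antisymm (Finset.min'_le _ _ h0) (Fin.mk_le_of_le_val (Nat.zero_le _))

lemma stop_eq_iff {L f : ℕ} (hL : 0 < L) (hfL : f ≤ L) (y : Fin L → ℝ) (p : Fin L)
    (hp : ∀ j, j ≠ p → y j < y p) :
    stopIdx L f hL y = p ↔
      (f ≤ (p : ℕ) + 1 ∧
        ∀ k : Fin L, f ≤ (k : ℕ) + 1 → k < p → ¬ (∀ j : Fin L, j < k → y j < y k)) := by
  have hpS : f ≤ (p : ℕ) + 1 → p ∈ Srec L f y :=
    fun h1 => mem_Srec.2 ⟨h1, fun j hj => hp j (ne_of_lt hj)⟩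
  rw [stopIdx_eq]
  by_cases hS : (Srec L f y).Nonempty
  · rw [dif_pos hS]
    constructor
    · intro h
      have hmem : p ∈ Srec L f y := h ▸ Finset.min'_mem _ hS
      refine ⟨(mem_Srec.1 hmem).1, ?_⟩
      intro k hk1 hk2 hrec
      have : p ≤ k := h ▸ Finset.min'_le _ _ (mem_Srec.2 ⟨hk1, hrec⟩)
      exact absurd hk2 (not_lt.2 this)
    · rintro ⟨h1, h2⟩
      have hmem := hpS h1
      have hle : (Srec L f y).min' hS ≤ p := Finset.min'_le _ _ hmem
      rcases lt_or_eq_of_le hle with hlt | heq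
      · have hm := mem_Srec.1 (Finset.min'_mem _ hS)
        exact absurd hm.2 (h2 _ hm.1 hlt)
      · exact heq
  · rw [dif_neg hS]
    constructor
    · intro h
      exfalso
      apply hS
      refine ⟨p, hpS ?_⟩
      have : (p : ℕ) = L - 1 := by rw [← h]
      omega
    · rintro ⟨h1, h2⟩
      exact absurd ⟨p, hpS h1⟩ hS

/-- Position of the maximum of `y` among the indices `< p` (junk value `p` if none). -/
def amax {L : ℕ} (y : Fin L → ℝ) (p : Fin L) : Fin L :=
  if h : (Finset.Iio p).Nonempty then
    Classical.choose ((Finset.Iio p).exists_max_image y h) else p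

lemma amax_spec {L : ℕ} (y : Fin L → ℝ) (p : Fin L) (h : (Finset.Iio p).Nonempty) :
    amax y p ∈ Finset.Iio p ∧ ∀ k ∈ Finset.Iio p, y k ≤ y (amax y p) := by
  rw [amax, dif_pos h]
  obtain ⟨h1, h2⟩ := Classical.choose_spec ((Finset.Iio p).exists_max_image y h)
  exact ⟨h1, h2⟩

lemma amax_eq {L : ℕ} {y : Fin L → ℝ} (hy : Function.Injective y) {p q : Fin L}
    (hq : q ∈ Finset.Iio p) (hmax : ∀ k ∈ Finset.Iio p, y k ≤ y q) : amax y p = q := by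
  obtain ⟨h1, h2⟩ := amax_spec y p ⟨q, hq⟩
  exact hy (le_antisymm (hmax _ h1) (h2 q hq))

lemma amax_swap {L : ℕ} (y : Fin L → ℝ) (hy : Function.Injective y) (m a b : Fin L)
    (ha : a < m) (hb : b < m) :
    amax (fun k => y (Equiv.swap a b k)) m = Equiv.swap a b (amax y m) := by
  have hmem : ∀ k : Fin L, k < m → Equiv.swap a b k < m := by
    intro k hk
    rcases eq_or_ne k a with rfl | h1
    · rwa [Equiv.swap_apply_left]
    rcases eq_or_ne k b with rfl | h2
    · rwa [Equiv.swap_apply_right]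
    · rwa [Equiv.swap_apply_of_ne_of_ne h1 h2]
  have hne : (Finset.Iio m).Nonempty := ⟨a, Finset.mem_Iio.2 ha⟩
  obtain ⟨h1, h2⟩ := amax_spec y m hne
  apply amax_eq (hy.comp (Equiv.injective _))
  · exact Finset.mem_Iio.2 (hmem _ (Finset.mem_Iio.1 h1))
  · intro k hk
    show y (Equiv.swap a b k) ≤ y (Equiv.swap a b (Equiv.swap a b (amax y m)))
    rw [Equiv.swap_apply_self]
    exact h2 _ (Finset.mem_Iio.2 (hmem _ (Finset.mem_Iio.1 hk)))

lemma norec_iff {L f : ℕ} (y : Fin L → ℝ) (hy : Function.Injective y) (p : Fin L)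
    (hf2 : 2 ≤ f) (hp1 : f ≤ (p : ℕ) + 1) :
    (∀ k : Fin L, f ≤ (k : ℕ) + 1 → k < p → ¬ (∀ j : Fin L, j < k → y j < y k)) ↔
      (amax y p : ℕ) < f - 1 := by
  have h0 : (0 : ℕ) < (p : ℕ) := by omega
  have hne : (Finset.Iio p).Nonempty :=
    ⟨⟨0, lt_trans h0 p.isLt⟩, Finset.mem_Iio.2 (by simpa [Fin.lt_def] using h0)⟩
  obtain ⟨hq1, hq2⟩ := amax_spec y p hne
  constructor
  · intro h
    by_contra hge
    push_neg at hge
    refine h (amax y p) (by omega) (Finset.mem_Iio.1 hq1) ?_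
    intro j hj
    have hle := hq2 j (Finset.mem_Iio.2 (lt_trans hj (Finset.mem_Iio.1 hq1)))
    exact lt_of_le_of_ne hle fun e => (ne_of_lt hj) (hy e)
  · intro hlt k hk1 hk2 hrec
    have hqk : amax y p < k := by rw [Fin.lt_def]; omega
    have h1 := hrec _ hqk
    have h2 := hq2 k (Finset.mem_Iio.2 hk2)
    linarith

end SecretaryAux

noncomputable section SecretaryCount

variable {L : ℕ}

lemma perm_mul_symm_apply (σ τ : Equiv.Perm (Fin L)) (a : Fin L) :
    (σ * τ).symm a = τ.symm (σ.symm a) := rfl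

/-- position of the maximum among the observations before the overall max. -/
def Apos (x : Fin L → ℝ) (M : Fin L) (σ : Equiv.Perm (Fin L)) : Fin L :=
  amax (fun k => x (σ k)) (σ.symm M)

def Bset (x : Fin L → ℝ) (M : Fin L) (m j : Fin L) : Finset (Equiv.Perm (Fin L)) :=
  Finset.univ.filter fun σ => σ.symm M = m ∧ Apos x M σ = j

lemma mem_Bset {x : Fin L → ℝ} {M m j : Fin L} {σ : Equiv.Perm (Fin L)} :
    σ ∈ Bset x M m j ↔ σ.symm M = m ∧ Apos x M σ = j := by
  simp [Bset]

lemma Bkey (x : Fin L → ℝ) (hx : Function.Injective x) (M m a b : Fin L)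
    (ha : a < m) (hb : b < m) :
    ∀ σ ∈ Bset x M m a, σ * Equiv.swap a b ∈ Bset x M m b := by
  intro σ hσ
  obtain ⟨h1, h2⟩ := mem_Bset.1 hσ
  have hms : (σ * Equiv.swap a b).symm M = m := by
    rw [perm_mul_symm_apply, h1, Equiv.symm_swap,
      Equiv.swap_apply_of_ne_of_ne ha.ne' hb.ne']
  refine mem_Bset.2 ⟨hms, ?_⟩
  show amax (fun k => x ((σ * Equiv.swap a b) k)) ((σ * Equiv.swap a b).symm M) = b
  rw [hms]
  have h3 : amax (fun k => x (σ (Equiv.swap a b k))) m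
      = Equiv.swap a b (amax (fun k => x (σ k)) m) :=
    amax_swap (fun k => x (σ k)) (hx.comp σ.injective) m a b ha hb
  rw [show (fun k => x ((σ * Equiv.swap a b) k)) = fun k => x (σ (Equiv.swap a b k)) from rfl,
    h3]
  have h2' : amax (fun k => x (σ k)) (σ.symm M) = a := h2
  rw [h1] at h2'
  rw [h2', Equiv.swap_apply_left]

lemma Bcard (x : Fin L → ℝ) (hx : Function.Injective x) (M m a b : Fin L)
    (ha : a < m) (hb : b < m) :
    (Bset x M m a).card = (Bset x M m b).card := by
  have hinv : ∀ σ : Equiv.Perm (Fin L), σ * Equiv.swap a b * Equiv.swap a b = σ := by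
    intro σ; rw [mul_assoc, Equiv.swap_mul_self, mul_one]
  refine Finset.card_bij' (fun σ _ => σ * Equiv.swap a b) (fun σ _ => σ * Equiv.swap a b)
    (Bkey x hx M m a b ha hb) ?_ (fun σ _ => hinv σ) (fun σ _ => hinv σ)
  intro σ hσ
  have := Bkey x hx M m b a hb ha σ hσ
  rwa [Equiv.swap_comm b a] at this

lemma fiber_card (M m m' : Fin L) :
    (Finset.univ.filter fun σ : Equiv.Perm (Fin L) => σ.symm M = m).card =
    (Finset.univ.filter fun σ : Equiv.Perm (Fin L) => σ.symm M = m').card := by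
  have key : ∀ (a b : Fin L) (σ : Equiv.Perm (Fin L)), σ.symm M = a →
      (σ * Equiv.swap a b).symm M = b := by
    intro a b σ h
    rw [perm_mul_symm_apply, h, Equiv.symm_swap, Equiv.swap_apply_left]
  have key' : ∀ (a b : Fin L) (σ : Equiv.Perm (Fin L)), σ.symm M = b →
      (σ * Equiv.swap a b).symm M = a := by
    intro a b σ h
    rw [perm_mul_symm_apply, h, Equiv.symm_swap, Equiv.swap_apply_right]
  have hinv : ∀ σ : Equiv.Perm (Fin L), σ * Equiv.swap m m' * Equiv.swap m m' = σ := by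
    intro σ; rw [mul_assoc, Equiv.swap_mul_self, mul_one]
  refine Finset.card_bij' (fun σ _ => σ * Equiv.swap m m') (fun σ _ => σ * Equiv.swap m m')
    ?_ ?_ (fun σ _ => hinv σ) (fun σ _ => hinv σ) <;>
    · intro σ hσ
      simp only [Finset.mem_filter, Finset.mem_univ, true_and] at hσ ⊢
      first
        | exact key m m' σ hσ
        | exact key' m m' σ hσ

end SecretaryCount


open Classical in
theorem stmt12 (L : ℕ) (hL : 1 ≤ L) (x : Fin L → ℝ) (hx : Function.Injective x)
    (f : ℕ) (hf1 : 1 ≤ f) (hfL : f ≤ L) :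
    (((Finset.univ : Finset (Equiv.Perm (Fin L))).filter
        (fun σ => ∀ j : Fin L,
          x (σ j) ≤ x (σ (stopIdx L f (by omega) (fun k => x (σ k)))))).card : ℝ)
      / (Nat.factorial L : ℝ)
    = if f = 1 then 1 / (L : ℝ)
      else (((f : ℝ) - 1) / (L : ℝ)) * ∑ l ∈ Finset.Icc f L, 1 / ((l : ℝ) - 1) := by
  suffices h : ∀ (hL0 : 0 < L),
      (((Finset.univ : Finset (Equiv.Perm (Fin L))).filter
        (fun σ => ∀ j : Fin L,
          x (σ j) ≤ x (σ (stopIdx L f hL0 (fun k => x (σ k)))))).card : ℝ)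
        / (Nat.factorial L : ℝ)
      = if f = 1 then 1 / (L : ℝ)
        else (((f : ℝ) - 1) / (L : ℝ)) * ∑ l ∈ Finset.Icc f L, 1 / ((l : ℝ) - 1) by
    exact h (by omega)
  intro hL0
  obtain ⟨M, -, hM⟩ :=
    Finset.exists_max_image (Finset.univ : Finset (Fin L)) x ⟨⟨0, hL0⟩, Finset.mem_univ _⟩
  have hMs : ∀ j, j ≠ M → x j < x M := fun j hj =>
    lt_of_le_of_ne (hM j (Finset.mem_univ j)) fun e => hj (hx e)
  have hps : ∀ (σ : Equiv.Perm (Fin L)) (j : Fin L),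
      j ≠ σ.symm M → x (σ j) < x (σ (σ.symm M)) := by
    intro σ j hj
    rw [Equiv.apply_symm_apply]
    refine hMs _ fun e => hj ?_
    rw [← e, Equiv.symm_apply_apply]
  have hfib := fiber_card M
  set d := (Finset.univ.filter fun σ : Equiv.Perm (Fin L) =>
      σ.symm M = (⟨0, hL0⟩ : Fin L)).card with hd
  have hLd : L * d = L.factorial := by
    have h1 : (Finset.univ : Finset (Equiv.Perm (Fin L))).card
        = ∑ m : Fin L,
            (Finset.univ.filter fun σ : Equiv.Perm (Fin L) => σ.symm M = m).card :=
      Finset.card_eq_sum_card_fiberwise fun σ _ => Finset.mem_univ _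
    rw [Finset.card_univ, Fintype.card_perm, Fintype.card_fin] at h1
    calc L * d = ∑ _m : Fin L, d := by
          rw [Finset.sum_const, Finset.card_univ, Fintype.card_fin, smul_eq_mul]
      _ = ∑ m : Fin L,
            (Finset.univ.filter fun σ : Equiv.Perm (Fin L) => σ.symm M = m).card :=
          Finset.sum_congr rfl fun m _ => hfib _ m
      _ = L.factorial := h1.symm
  have hfac0 : 0 < L.factorial := Nat.factorial_pos L
  have hd0 : 0 < d := by
    rcases Nat.eq_zero_or_pos d with h | h
    · rw [h, mul_zero] at hLd; omega
    · exact h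
  by_cases hf' : f = 1
  · subst hf'
    rw [if_pos rfl]
    have heq : (Finset.univ.filter
        (fun σ : Equiv.Perm (Fin L) => ∀ j : Fin L,
          x (σ j) ≤ x (σ (stopIdx L 1 hL0 (fun k => x (σ k))))))
        = Finset.univ.filter fun σ : Equiv.Perm (Fin L) => σ.symm M = (⟨0, hL0⟩ : Fin L) := by
      ext σ
      simp only [Finset.mem_filter, Finset.mem_univ, true_and]
      refine (success_iff (fun k => x (σ k)) _ _ (hps σ)).trans ?_
      rw [stopIdx_eq_zero hL0]
      exact eq_comm
    rw [heq, ← hd, ← hLd]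
    have h2 : (L : ℝ) ≠ 0 := Nat.cast_ne_zero.2 (by omega)
    have h3 : (d : ℝ) ≠ 0 := Nat.cast_ne_zero.2 (by omega)
    push_cast
    field_simp
  · rw [if_neg hf']
    have hf2 : 2 ≤ f := by omega
    have heq : (Finset.univ.filter
        (fun σ : Equiv.Perm (Fin L) => ∀ j : Fin L,
          x (σ j) ≤ x (σ (stopIdx L f hL0 (fun k => x (σ k))))))
        = Finset.univ.filter fun σ : Equiv.Perm (Fin L) =>
            f ≤ (σ.symm M : ℕ) + 1 ∧ (Apos x M σ : ℕ) < f - 1 := by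
      ext σ
      simp only [Finset.mem_filter, Finset.mem_univ, true_and]
      refine (success_iff (fun k => x (σ k)) _ _ (hps σ)).trans
        ((stop_eq_iff hL0 hfL _ _ (hps σ)).trans ?_)
      constructor
      · rintro ⟨h1, h2⟩
        exact ⟨h1, (norec_iff _ (hx.comp σ.injective) _ hf2 h1).1 h2⟩
      · rintro ⟨h1, h2⟩
        exact ⟨h1, (norec_iff _ (hx.comp σ.injective) _ hf2 h1).2 h2⟩
    rw [heq]
    set t : Finset (Fin L) := Finset.univ.filter (fun m : Fin L => f ≤ (m : ℕ) + 1) with ht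
    set c : Fin L → ℕ := fun m => (Bset x M m ⟨0, hL0⟩).card with hc
    have hj0 : ∀ m : Fin L, 1 ≤ (m : ℕ) → (⟨0, hL0⟩ : Fin L) < m := by
      intro m h
      rw [Fin.lt_def]; exact h
    -- `m * c m = d` for `m ≥ 1`
    have hmc : ∀ m : Fin L, 1 ≤ (m : ℕ) → (m : ℕ) * c m = d := by
      intro m hm
      have h1 : (Finset.univ.filter fun σ : Equiv.Perm (Fin L) => σ.symm M = m).card
          = ∑ j ∈ Finset.Iio m,
              ((Finset.univ.filter fun σ : Equiv.Perm (Fin L) => σ.symm M = m).filter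
                fun σ => Apos x M σ = j).card := by
        apply Finset.card_eq_sum_card_fiberwise
        intro σ hσ
        rw [Finset.mem_coe, Finset.mem_filter] at hσ
        have hne : (Finset.Iio (σ.symm M)).Nonempty :=
          ⟨⟨0, hL0⟩, Finset.mem_Iio.2 (by rw [hσ.2]; exact hj0 m hm)⟩
        have h' : Apos x M σ < σ.symm M :=
          Finset.mem_Iio.1 (amax_spec (fun k => x (σ k)) (σ.symm M) hne).1
        rw [hσ.2] at h'
        exact Finset.mem_coe.2 (Finset.mem_Iio.2 h')
      have h2 : ∀ j ∈ Finset.Iio m,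
          ((Finset.univ.filter fun σ : Equiv.Perm (Fin L) => σ.symm M = m).filter
            fun σ => Apos x M σ = j) = Bset x M m j := by
        intro j _
        ext σ
        simp [Bset, Finset.mem_filter, and_assoc]
      have h3 : ∀ j ∈ Finset.Iio m, (Bset x M m j).card = c m := fun j hj =>
        Bcard x hx M m j ⟨0, hL0⟩ (Finset.mem_Iio.1 hj) (hj0 m hm)
      calc (m : ℕ) * c m = ∑ _j ∈ Finset.Iio m, c m := by
            rw [Finset.sum_const, Fin.card_Iio, smul_eq_mul]
        _ = ∑ j ∈ Finset.Iio m, (Bset x M m j).card := (Finset.sum_congr rfl h3).symm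
        _ = ∑ j ∈ Finset.Iio m,
              ((Finset.univ.filter fun σ : Equiv.Perm (Fin L) => σ.symm M = m).filter
                fun σ => Apos x M σ = j).card :=
            Finset.sum_congr rfl fun j hj => by rw [h2 j hj]
        _ = (Finset.univ.filter fun σ : Equiv.Perm (Fin L) => σ.symm M = m).card := h1.symm
        _ = d := hfib m ⟨0, hL0⟩
    -- success count
    have hsc : (Finset.univ.filter fun σ : Equiv.Perm (Fin L) =>
          f ≤ (σ.symm M : ℕ) + 1 ∧ (Apos x M σ : ℕ) < f - 1).card
        = ∑ m ∈ t, (f - 1) * c m := by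
      have h1 : (Finset.univ.filter fun σ : Equiv.Perm (Fin L) =>
            f ≤ (σ.symm M : ℕ) + 1 ∧ (Apos x M σ : ℕ) < f - 1).card
          = ∑ m ∈ t,
              ((Finset.univ.filter fun σ : Equiv.Perm (Fin L) =>
                f ≤ (σ.symm M : ℕ) + 1 ∧ (Apos x M σ : ℕ) < f - 1).filter
                  fun σ => σ.symm M = m).card := by
        apply Finset.card_eq_sum_card_fiberwise
        intro σ hσ
        rw [Finset.mem_coe, Finset.mem_filter] at hσ
        rw [Finset.mem_coe, ht, Finset.mem_filter]
        exact ⟨Finset.mem_univ _, hσ.2.1⟩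
      rw [h1]
      apply Finset.sum_congr rfl
      intro m hm
      have hm1 : f ≤ (m : ℕ) + 1 := by
        rw [ht, Finset.mem_filter] at hm; exact hm.2
      have hmge : 1 ≤ (m : ℕ) := by omega
      have h2 : ((Finset.univ.filter fun σ : Equiv.Perm (Fin L) =>
            f ≤ (σ.symm M : ℕ) + 1 ∧ (Apos x M σ : ℕ) < f - 1).filter
              fun σ => σ.symm M = m).card
          = ∑ j ∈ Finset.univ.filter (fun j : Fin L => (j : ℕ) < f - 1),
              (((Finset.univ.filter fun σ : Equiv.Perm (Fin L) =>
                f ≤ (σ.symm M : ℕ) + 1 ∧ (Apos x M σ : ℕ) < f - 1).filter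
                  fun σ => σ.symm M = m).filter fun σ => Apos x M σ = j).card := by
        apply Finset.card_eq_sum_card_fiberwise
        intro σ hσ
        simp only [Finset.mem_coe, Finset.mem_filter, Finset.mem_univ, true_and] at hσ ⊢
        exact hσ.1.2
      rw [h2]
      have h3 : ∀ j ∈ Finset.univ.filter (fun j : Fin L => (j : ℕ) < f - 1),
          (((Finset.univ.filter fun σ : Equiv.Perm (Fin L) =>
            f ≤ (σ.symm M : ℕ) + 1 ∧ (Apos x M σ : ℕ) < f - 1).filter
              fun σ => σ.symm M = m).filter fun σ => Apos x M σ = j) = Bset x M m j := by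
        intro j hj
        rw [Finset.mem_filter] at hj
        ext σ
        simp only [Finset.mem_filter, Finset.mem_univ, true_and, mem_Bset]
        constructor
        · rintro ⟨⟨-, h5⟩, h6⟩
          exact ⟨h5, h6⟩
        · rintro ⟨h5, h6⟩
          exact ⟨⟨⟨by rw [h5]; exact hm1, by rw [h6]; exact hj.2⟩, h5⟩, h6⟩
      have h4 : ∀ j ∈ Finset.univ.filter (fun j : Fin L => (j : ℕ) < f - 1),
          (Bset x M m j).card = c m := by
        intro j hj
        rw [Finset.mem_filter] at hj
        exact Bcard x hx M m j ⟨0, hL0⟩ (by rw [Fin.lt_def]; omega) (hj0 m hmge)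
      have h5 : (Finset.univ.filter (fun j : Fin L => (j : ℕ) < f - 1))
          = Finset.Iio (⟨f - 1, by omega⟩ : Fin L) := by
        ext j
        simp [Finset.mem_Iio, Fin.lt_def]
      calc ∑ j ∈ Finset.univ.filter (fun j : Fin L => (j : ℕ) < f - 1),
              (((Finset.univ.filter fun σ : Equiv.Perm (Fin L) =>
                f ≤ (σ.symm M : ℕ) + 1 ∧ (Apos x M σ : ℕ) < f - 1).filter
                  fun σ => σ.symm M = m).filter fun σ => Apos x M σ = j).card
          = ∑ j ∈ Finset.univ.filter (fun j : Fin L => (j : ℕ) < f - 1), c m :=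
            Finset.sum_congr rfl fun j hj => by rw [h3 j hj]; exact h4 j hj
        _ = (f - 1) * c m := by
            rw [Finset.sum_const, h5, Fin.card_Iio, smul_eq_mul]
    rw [hsc]
    have hterm : ∀ m ∈ t, (((f - 1) * c m : ℕ) : ℝ) / (L.factorial : ℝ)
        = (((f : ℝ) - 1) / L) * (1 / ((m : ℕ) : ℝ)) := by
      intro m hm
      have hm1 : f ≤ (m : ℕ) + 1 := by
        rw [ht, Finset.mem_filter] at hm; exact hm.2
      have hmge : 1 ≤ (m : ℕ) := by omega
      have hcm : (m : ℕ) * c m = d := hmc m hmge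
      have hcm0 : c m ≠ 0 := by
        intro h; rw [h, mul_zero] at hcm; omega
      have hfac : (L.factorial : ℝ) = (L : ℝ) * ((m : ℕ) : ℝ) * (c m : ℝ) := by
        have h6 : L * ((m : ℕ) * c m) = L.factorial := by rw [hcm]; exact hLd
        rw [← h6]; push_cast; ring
      have h1 : ((m : ℕ) : ℝ) ≠ 0 := Nat.cast_ne_zero.2 (by omega)
      have h2 : (L : ℝ) ≠ 0 := Nat.cast_ne_zero.2 (by omega)
      have h3 : ((c m : ℕ) : ℝ) ≠ 0 := Nat.cast_ne_zero.2 hcm0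
      rw [hfac]
      push_cast [Nat.cast_sub hf1]
      field_simp
    rw [Nat.cast_sum, Finset.sum_div, Finset.sum_congr rfl hterm, ← Finset.mul_sum]
    congr 1
    refine Finset.sum_bij' (fun m _ => (m : ℕ) + 1)
      (fun l hl => (⟨l - 1, by have := Finset.mem_Icc.1 hl; omega⟩ : Fin L))
      ?_ ?_ ?_ ?_ ?_
    · intro m hm
      rw [ht, Finset.mem_filter] at hm
      rw [Finset.mem_Icc]
      exact ⟨hm.2, m.isLt⟩
    · intro l hl
      have := Finset.mem_Icc.1 hl
      rw [ht, Finset.mem_filter]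
      refine ⟨Finset.mem_univ _, ?_⟩
      simp only [Fin.val_mk]
      omega
    · intro m hm
      apply Fin.ext
      simp
    · intro l hl
      have := Finset.mem_Icc.1 hl
      simp only [Fin.val_mk]
      omega
    · intro m hm
      rw [ht, Finset.mem_filter] at hm
      have : (((m : ℕ) + 1 : ℕ) : ℝ) - 1 = ((m : ℕ) : ℝ) := by push_cast; ring
      rw [this]
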